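/- Let (X,·,d) be a group which is metric invariant, with identity element e. Then: (i) if f and g are Katetov maps on X, so is f ⊕ g; (ii) (𝒦(X), ⊕) is a monoid whose identity element is δ_e = d(e,·), and it is commutative whenever X is commutative; (iii) for all f,g,h ∈ 𝒦(X), d_∞(f ⊕ g, h ⊕ g) ≤ d_∞(f,h) and d_∞(g ⊕ f, g ⊕ h) ≤ d_∞(f,h). -/
import Mathlib


/-- The inf-convolution of two real-valued functions on a group:
`(f ⊕ g)(x) = inf { f y + g z : y * z = x }`. -/
noncomputable def infConv {X : Type*} [Mul X] (f g : X → ℝ) : X → ℝ :=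
  fun x => sInf {r : ℝ | ∃ y z : X, y * z = x ∧ r = f y + g z}

/-- A Katetov map: `|f x − f y| ≤ d(x,y) ≤ f x + f y` for all `x, y`. -/
def IsKatetov {X : Type*} [MetricSpace X] (f : X → ℝ) : Prop :=
  ∀ x y : X, |f x - f y| ≤ dist x y ∧ dist x y ≤ f x + f y

/-- The sup-metric `d_∞(f,g) = sup_x |f x − g x|`. -/
noncomputable def dInf {X : Type*} (f g : X → ℝ) : ℝ :=
  ⨆ x : X, |f x - g x|

section Aux

variable {X : Type*} [Group X] [MetricSpace X]

lemma katetov_nonneg {f : X → ℝ} (hf : IsKatetov f) (x : X) : 0 ≤ f x := by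
  have h := (hf x x).2
  simp at h
  linarith

lemma infConv_set_nonempty (f g : X → ℝ) (x : X) :
    Set.Nonempty {r : ℝ | ∃ y z : X, y * z = x ∧ r = f y + g z} :=
  ⟨f 1 + g x, 1, x, one_mul x, rfl⟩

lemma infConv_set_bddBelow {f g : X → ℝ} (hf : IsKatetov f) (hg : IsKatetov g) (x : X) :
    BddBelow {r : ℝ | ∃ y z : X, y * z = x ∧ r = f y + g z} := by
  refine ⟨0, ?_⟩
  rintro r ⟨y, z, -, rfl⟩
  have h1 := katetov_nonneg hf y
  have h2 := katetov_nonneg hg z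
  linarith

lemma infConv_le {f g : X → ℝ} (hf : IsKatetov f) (hg : IsKatetov g) {x y z : X}
    (h : y * z = x) : infConv f g x ≤ f y + g z :=
  csInf_le (infConv_set_bddBelow hf hg x) ⟨y, z, h, rfl⟩

lemma le_infConv {f g : X → ℝ} {x : X} {c : ℝ}
    (h : ∀ y z : X, y * z = x → c ≤ f y + g z) : c ≤ infConv f g x :=
  le_csInf (infConv_set_nonempty f g x) (by rintro r ⟨y, z, hyz, rfl⟩; exact h y z hyz)

lemma katetov_infConv (hleft : ∀ x y z : X, dist (x * y) (x * z) = dist y z)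
    (hright : ∀ x y z : X, dist (y * x) (z * x) = dist y z)
    {f g : X → ℝ} (hf : IsKatetov f) (hg : IsKatetov g) : IsKatetov (infConv f g) := by
  have key : ∀ a b : X, infConv f g a ≤ infConv f g b + dist a b := by
    intro a b
    have h : infConv f g a - dist a b ≤ infConv f g b := by
      apply le_infConv
      intro y z hyz
      have h1 : infConv f g a ≤ f y + g (y⁻¹ * a) := infConv_le hf hg (by group)
      have hz : z = y⁻¹ * b := by rw [← hyz]; group
      have hd : dist (y⁻¹ * a) z = dist a b := by rw [hz, hleft]
      have h2 : g (y⁻¹ * a) - g z ≤ dist a b := by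
        have := (abs_sub_le_iff.mp (hg (y⁻¹ * a) z).1).1
        linarith [this, hd.le, hd.ge]
      linarith
    linarith
  intro x y
  constructor
  · rw [abs_sub_le_iff]
    refine ⟨by linarith [key x y], ?_⟩
    have := key y x
    rw [dist_comm] at this
    linarith
  · have h : dist x y - infConv f g y ≤ infConv f g x := by
      apply le_infConv
      intro a b hab
      have h' : dist x y - (f a + g b) ≤ infConv f g y := by
        apply le_infConv
        intro a' b' hab'
        have h1 : dist x y ≤ dist x (a' * b) + dist (a' * b) y := dist_triangle _ _ _
        have h2 : dist x (a' * b) = dist a a' := by rw [← hab, hright]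
        have h3 : dist (a' * b) y = dist b b' := by rw [← hab', hleft]
        have h4 := (hg b b').2
        have h5 := (hf a a').2
        linarith
      linarith
    linarith

lemma delta_katetov : IsKatetov (fun x : X => dist 1 x) := by
  intro x y
  constructor
  · simpa [dist_comm] using abs_dist_sub_le x y 1
  · calc dist x y ≤ dist x 1 + dist 1 y := dist_triangle _ _ _
    _ = dist 1 x + dist 1 y := by rw [dist_comm x 1]

lemma infConv_delta_left (hright : ∀ x y z : X, dist (y * x) (z * x) = dist y z)
    {f : X → ℝ} (hf : IsKatetov f) : infConv (fun x => dist (1 : X) x) f = f := by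
  funext x
  apply le_antisymm
  · have := infConv_le (delta_katetov) hf (one_mul x)
    simpa using this
  · apply le_infConv
    intro y z hyz
    have h1 : f x - f z ≤ dist x z := (abs_sub_le_iff.mp (hf x z).1).1
    have h2 : dist x z = dist 1 y := by
      have := hright z y 1
      rw [one_mul, hyz] at this
      rw [this, dist_comm]
    linarith

lemma infConv_delta_right (hleft : ∀ x y z : X, dist (x * y) (x * z) = dist y z)
    {f : X → ℝ} (hf : IsKatetov f) : infConv f (fun x => dist (1 : X) x) = f := by
  funext x
  apply le_antisymm
  · have := infConv_le hf (delta_katetov) (mul_one x)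
    simpa using this
  · apply le_infConv
    intro y z hyz
    have h1 : f x - f y ≤ dist x y := (abs_sub_le_iff.mp (hf x y).1).1
    have h2 : dist x y = dist 1 z := by
      have := hleft y z 1
      rw [mul_one, hyz] at this
      rw [this, dist_comm]
    linarith

lemma infConv_assoc (hleft : ∀ x y z : X, dist (x * y) (x * z) = dist y z)
    (hright : ∀ x y z : X, dist (y * x) (z * x) = dist y z)
    {f g h : X → ℝ} (hf : IsKatetov f) (hg : IsKatetov g) (hh : IsKatetov h) :
    infConv (infConv f g) h = infConv f (infConv g h) := by
  have hfg := katetov_infConv hleft hright hf hg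
  have hgh := katetov_infConv hleft hright hg hh
  funext x
  apply le_antisymm
  · apply le_infConv
    intro y w hyw
    have h' : infConv (infConv f g) h x - f y ≤ infConv g h w := by
      apply le_infConv
      intro z u hzu
      have h1 : infConv (infConv f g) h x ≤ infConv f g (y * z) + h u :=
        infConv_le hfg hh (by rw [mul_assoc, hzu, hyw])
      have h2 : infConv f g (y * z) ≤ f y + g z := infConv_le hf hg rfl
      linarith
    linarith
  · apply le_infConv
    intro w u hwu
    have h' : infConv f (infConv g h) x - h u ≤ infConv f g w := by
      apply le_infConv
      intro y z hyz
      have h1 : infConv f (infConv g h) x ≤ f y + infConv g h (z * u) :=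
        infConv_le hf hgh (by rw [← mul_assoc, hyz, hwu])
      have h2 : infConv g h (z * u) ≤ g z + h u := infConv_le hg hh rfl
      linarith
    linarith

lemma infConv_comm' (hc : ∀ x y : X, x * y = y * x) (f g : X → ℝ) :
    infConv f g = infConv g f := by
  funext x
  unfold infConv
  congr 1
  ext r
  constructor
  · rintro ⟨y, z, hyz, rfl⟩; exact ⟨z, y, by rw [hc, hyz], by ring⟩
  · rintro ⟨y, z, hyz, rfl⟩; exact ⟨z, y, by rw [hc, hyz], by ring⟩

lemma diff_bdd {f h : X → ℝ} (hf : IsKatetov f) (hh : IsKatetov h) (x : X) :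
    |f x - h x| ≤ f 1 + h 1 := by
  have h1 := (abs_sub_le_iff.mp (hf x 1).1).1
  have h2 := (abs_sub_le_iff.mp (hh x 1).1).1
  have h3 := (hf x 1).2
  have h4 := (hh x 1).2
  rw [abs_sub_le_iff]
  constructor <;> linarith

lemma abs_sub_le_dInf {f h : X → ℝ} (hf : IsKatetov f) (hh : IsKatetov h) (x : X) :
    |f x - h x| ≤ dInf f h :=
  le_ciSup ⟨f 1 + h 1, by rintro r ⟨y, rfl⟩; exact diff_bdd hf hh y⟩ x

lemma dInf_infConv_right {f g h : X → ℝ} (hf : IsKatetov f) (hg : IsKatetov g)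
    (hh : IsKatetov h) : dInf (infConv f g) (infConv h g) ≤ dInf f h := by
  haveI : Nonempty X := ⟨1⟩
  apply ciSup_le
  intro x
  rw [abs_sub_le_iff]
  constructor
  · have h' : infConv f g x - dInf f h ≤ infConv h g x := by
      apply le_infConv
      intro y z hyz
      have h1 := infConv_le hf hg hyz
      have h2 := (abs_sub_le_iff.mp (abs_sub_le_dInf hf hh y)).1
      linarith
    linarith
  · have h' : infConv h g x - dInf f h ≤ infConv f g x := by
      apply le_infConv
      intro y z hyz
      have h1 := infConv_le hh hg hyz
      have h2 := (abs_sub_le_iff.mp (abs_sub_le_dInf hf hh y)).2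
      linarith
    linarith

lemma dInf_infConv_left {f g h : X → ℝ} (hf : IsKatetov f) (hg : IsKatetov g)
    (hh : IsKatetov h) : dInf (infConv g f) (infConv g h) ≤ dInf f h := by
  haveI : Nonempty X := ⟨1⟩
  apply ciSup_le
  intro x
  rw [abs_sub_le_iff]
  constructor
  · have h' : infConv g f x - dInf f h ≤ infConv g h x := by
      apply le_infConv
      intro y z hyz
      have h1 := infConv_le hg hf hyz
      have h2 := (abs_sub_le_iff.mp (abs_sub_le_dInf hf hh z)).1
      linarith
    linarith
  · have h' : infConv g h x - dInf f h ≤ infConv g f x := by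
      apply le_infConv
      intro y z hyz
      have h1 := infConv_le hg hh hyz
      have h2 := (abs_sub_le_iff.mp (abs_sub_le_dInf hf hh z)).2
      linarith
    linarith

end Aux

/-- on a metric invariant group, (i) the inf-convolution of two Katetov
maps is Katetov; (ii) `(𝒦(X), ⊕)` is a monoid with identity `δ_e = d(1,·)`,
commutative whenever `X` is; (iii) `d_∞(f ⊕ g, h ⊕ g) ≤ d_∞(f, h)` and
`d_∞(g ⊕ f, g ⊕ h) ≤ d_∞(f, h)`. -/
theorem katetov_monoid {X : Type*} [Group X] [MetricSpace X]
    (hleft : ∀ x y z : X, dist (x * y) (x * z) = dist y z)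
    (hright : ∀ x y z : X, dist (y * x) (z * x) = dist y z) :
    (∀ f g : X → ℝ, IsKatetov f → IsKatetov g → IsKatetov (infConv f g)) ∧
    (∀ f g h : X → ℝ, IsKatetov f → IsKatetov g → IsKatetov h →
       infConv (infConv f g) h = infConv f (infConv g h)) ∧
    (∀ f : X → ℝ, IsKatetov f →
       infConv (fun x => dist (1 : X) x) f = f ∧ infConv f (fun x => dist (1 : X) x) = f) ∧
    ((∀ x y : X, x * y = y * x) →
       ∀ f g : X → ℝ, IsKatetov f → IsKatetov g → infConv f g = infConv g f) ∧
    (∀ f g h : X → ℝ, IsKatetov f → IsKatetov g → IsKatetov h →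
       dInf (infConv f g) (infConv h g) ≤ dInf f h ∧
       dInf (infConv g f) (infConv g h) ≤ dInf f h) :=
  ⟨fun _ _ hf hg => katetov_infConv hleft hright hf hg,
   fun _ _ _ hf hg hh => infConv_assoc hleft hright hf hg hh,
   fun _ hf => ⟨infConv_delta_left hright hf, infConv_delta_right hleft hf⟩,
   fun hc f g _ _ => infConv_comm' hc f g,
   fun _ _ _ hf hg hh => ⟨dInf_infConv_right hf hg hh, dInf_infConv_left hf hg hh⟩⟩
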